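/- Let K be a perfect field of characteristic p > 0 equipped with an additive real-valued valuation v, let c ≥ 0, and let a, b : ℕ → K be sequences with v(a_k) ≥ −c and v(b_k) ≥ −c for every k. For m ≥ 0 set S_m = Σ_{k=0}^m a_k^{1/p^k} and S'_m = (a_0 − b_0) + Σ_{k=1}^m (a_k + b_{k-1}^p − b_k)^{1/p^k}. Then both sequences m ↦ min{0, v(S_m)} and m ↦ min{0, v(S'_m)} converge (with the convention min{0, ∞} = 0), their limits are equal, and moreover inf_{k≥0} min{0, v(a_k)} ≤ lim_{m→∞} min{0, v(S_m)}. -/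

import Mathlib

open Filter

/-- Let `K` be a perfect field of characteristic `p > 0` with an additive
real-valued valuation `v`, let `c ≥ 0`, and let `a b : ℕ → K` satisfy `v (a k) ≥ −c` and
`v (b k) ≥ −c` for all `k`.  Set `S_m = Σ_{k=0}^m a_k^{1/p^k}` and
`S'_m = (a_0 − b_0) + Σ_{k=1}^m (a_k + b_{k-1}^p − b_k)^{1/p^k}` (the `p^k`-th roots taken
via the inverse Frobenius).  Then `m ↦ min{0, v(S_m)}` and `m ↦ min{0, v(S'_m)}` both
converge (with `min{0, ∞} = 0`), their limits coincide, and
`inf_k min{0, v(a_k)} ≤ lim_m min{0, v(S_m)}`. -/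
theorem statement11 {p : ℕ} [Fact p.Prime] {K : Type*} [Field K] [ExpChar K p]
    [CharP K p] [PerfectRing K p]
    (v : K → WithTop ℝ)
    (hv0 : ∀ x : K, v x = ⊤ ↔ x = 0)
    (hvmul : ∀ x y : K, v (x * y) = v x + v y)
    (hvadd : ∀ x y : K, min (v x) (v y) ≤ v (x + y))
    (c : ℝ) (hc : 0 ≤ c) (a b : ℕ → K)
    (ha : ∀ k : ℕ, ((-c : ℝ) : WithTop ℝ) ≤ v (a k))
    (hb : ∀ k : ℕ, ((-c : ℝ) : WithTop ℝ) ≤ v (b k)) :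
    ∃ lim : ℝ,
      Tendsto
        (fun m : ℕ =>
          min 0 (WithTop.untopD 0 (v (∑ k ∈ Finset.range (m + 1),
            (fun y : K => (frobeniusEquiv K p).symm y)^[k] (a k)))))
        atTop (nhds lim) ∧
      Tendsto
        (fun m : ℕ =>
          min 0 (WithTop.untopD 0 (v (∑ k ∈ Finset.range (m + 1),
            (fun y : K => (frobeniusEquiv K p).symm y)^[k]
              (a k + (if k = 0 then 0 else b (k - 1) ^ p) - b k)))))
        atTop (nhds lim) ∧
      (⨅ k : ℕ, min 0 (WithTop.untopD 0 (v (a k)))) ≤ lim := by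
  have hp : p.Prime := Fact.out
  have hppos : (0 : ℝ) < p := by exact_mod_cast hp.pos
  have hp1 : (1 : ℝ) < p := by exact_mod_cast hp.one_lt
  set ψ : K → K := fun y : K => (frobeniusEquiv K p).symm y with hψdef
  -- v 1 = 0
  have hv1 : v 1 = 0 := by
    have h1 : v 1 = v 1 + v 1 := by simpa using hvmul 1 1
    have hne : v 1 ≠ ⊤ := by simp [hv0]
    obtain ⟨s, hs⟩ := WithTop.ne_top_iff_exists.mp hne
    rw [← hs] at h1 ⊢
    rw [← WithTop.coe_add, WithTop.coe_eq_coe] at h1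
    have : s = 0 := by linarith
    simp [this]
  -- v (-x) = v x
  have hvneg : ∀ x : K, v (-x) = v x := by
    intro x
    have hm1 : v (-1 : K) = 0 := by
      have h1 : (0 : WithTop ℝ) = v (-1 : K) + v (-1 : K) := by
        have := hvmul (-1 : K) (-1 : K)
        simpa [hv1] using this
      have hne : v (-1 : K) ≠ ⊤ := by simp [hv0]
      obtain ⟨s, hs⟩ := WithTop.ne_top_iff_exists.mp hne
      rw [← hs] at h1 ⊢
      rw [← WithTop.coe_add, ← WithTop.coe_zero, WithTop.coe_eq_coe] at h1
      have : s = 0 := by linarith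
      simp [this]
    have := hvmul (-1 : K) x
    simpa [hm1] using this
  -- v (x ^ n)
  have hvpow : ∀ (n : ℕ) (x : K) (s : ℝ), v x = (s : WithTop ℝ) →
      v (x ^ n) = (((n : ℝ) * s : ℝ) : WithTop ℝ) := by
    intro n x s hs
    induction n with
    | zero => simp [hv1]
    | succ n ih =>
        rw [pow_succ, hvmul, ih, hs, ← WithTop.coe_add, WithTop.coe_eq_coe]
        push_cast
        ring
  -- one-step root estimate
  have hroot1 : ∀ (x : K) (t : ℝ), ((t : ℝ) : WithTop ℝ) ≤ v x →
      ((t / p : ℝ) : WithTop ℝ) ≤ v (ψ x) := by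
    intro x t ht
    rcases eq_or_ne (v (ψ x)) ⊤ with h | h
    · rw [h]; exact le_top
    · obtain ⟨s, hs⟩ := WithTop.ne_top_iff_exists.mp h
      have hxψ : (ψ x) ^ p = x := frobeniusEquiv_symm_pow_p K p x
      have hvx : v x = (((p : ℝ) * s : ℝ) : WithTop ℝ) := by
        rw [← hxψ]; exact hvpow p (ψ x) s hs.symm
      rw [hvx] at ht
      rw [← hs, WithTop.coe_le_coe]
      rw [WithTop.coe_le_coe] at ht
      rw [div_le_iff₀ hppos]
      linarith
  -- iterated root estimate
  have hroot : ∀ (k : ℕ) (x : K) (t : ℝ), ((t : ℝ) : WithTop ℝ) ≤ v x →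
      ((t / (p : ℝ) ^ k : ℝ) : WithTop ℝ) ≤ v (ψ^[k] x) := by
    intro k
    induction k with
    | zero => intro x t ht; simpa using ht
    | succ k ih =>
        intro x t ht
        rw [Function.iterate_succ_apply]
        have h1 := hroot1 x t ht
        have h2 := ih (ψ x) (t / p) h1
        have heq : t / (p : ℝ) / (p : ℝ) ^ k = t / (p : ℝ) ^ (k + 1) := by
          rw [div_div, pow_succ]
          ring_nf
        rwa [heq] at h2
  -- G
  set G : K → ℝ := fun x => min 0 (WithTop.untopD 0 (v x)) with hGdef
  have hGle : ∀ x : K, G x ≤ 0 := fun x => min_le_left _ _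
  have hGge : ∀ (x : K) (t : ℝ), t ≤ 0 → ((t : ℝ) : WithTop ℝ) ≤ v x → t ≤ G x := by
    intro x t ht h
    rcases eq_or_ne (v x) ⊤ with hx | hx
    · simp [hGdef, hx, ht]
    · obtain ⟨s, hs⟩ := WithTop.ne_top_iff_exists.mp hx
      rw [← hs, WithTop.coe_le_coe] at h
      simp only [hGdef, ← hs, WithTop.untopD_coe]
      exact le_min ht h
  have hvG : ∀ x : K, ((G x : ℝ) : WithTop ℝ) ≤ v x := by
    intro x
    rcases eq_or_ne (v x) ⊤ with hx | hx
    · rw [hx]; exact le_top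
    · obtain ⟨s, hs⟩ := WithTop.ne_top_iff_exists.mp hx
      rw [← hs, WithTop.coe_le_coe]
      simp only [hGdef, ← hs, WithTop.untopD_coe]
      exact min_le_right _ _
  -- Lipschitz-type estimate
  have hLip : ∀ (x y : K) (ε : ℝ), 0 ≤ ε → (((-ε : ℝ)) : WithTop ℝ) ≤ v (y - x) →
      G x - ε ≤ G y := by
    intro x y ε hε h
    have hxy : x + (y - x) = y := by ring
    have h1 : min (v x) (v (y - x)) ≤ v y := by
      have := hvadd x (y - x); rwa [hxy] at this
    have h2 : ((G x - ε : ℝ) : WithTop ℝ) ≤ v y := by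
      refine le_trans (le_min ?_ ?_) h1
      · exact le_trans (WithTop.coe_le_coe.mpr (by linarith)) (hvG x)
      · exact le_trans (WithTop.coe_le_coe.mpr (by have := hGle x; linarith)) h
    exact hGge y (G x - ε) (by have := hGle x; linarith) h2
  have hdist : ∀ (x y : K) (ε : ℝ), 0 ≤ ε → (((-ε : ℝ)) : WithTop ℝ) ≤ v (y - x) →
      dist (G x) (G y) ≤ ε := by
    intro x y ε hε h
    have h1 : G x - ε ≤ G y := hLip x y ε hε h
    have h' : (((-ε : ℝ)) : WithTop ℝ) ≤ v (x - y) := by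
      rw [show x - y = -(y - x) by ring, hvneg]; exact h
    have h2 : G y - ε ≤ G x := hLip y x ε hε h'
    rw [Real.dist_eq, abs_sub_le_iff]
    constructor <;> linarith
  -- sum estimate
  have hsum : ∀ (t : ℝ) (m : ℕ) (g : ℕ → K), (∀ i, i < m → ((t : ℝ) : WithTop ℝ) ≤ v (g i)) →
      ((t : ℝ) : WithTop ℝ) ≤ v (∑ i ∈ Finset.range m, g i) := by
    intro t m g hg
    induction m with
    | zero =>
        simp only [Finset.range_zero, Finset.sum_empty]
        rw [(hv0 0).mpr rfl]
        exact le_top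
    | succ m ih =>
        rw [Finset.sum_range_succ]
        refine le_trans (le_min ?_ ?_) (hvadd _ _)
        · exact ih (fun i hi => hg i (by omega))
        · exact hg m (by omega)
  -- the two sums
  set S : ℕ → K := fun m => ∑ k ∈ Finset.range (m + 1), ψ^[k] (a k) with hSdef
  set T : ℕ → K := fun m => ∑ k ∈ Finset.range (m + 1),
      ψ^[k] (a k + (if k = 0 then 0 else b (k - 1) ^ p) - b k) with hTdef
  -- Cauchy estimate for G ∘ S
  have hSstep : ∀ m : ℕ, dist (G (S m)) (G (S (m + 1))) ≤ (c / p) * (1 / p) ^ m := by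
    intro m
    have hdiff : S (m + 1) - S m = ψ^[m + 1] (a (m + 1)) := by
      simp only [hSdef, Finset.sum_range_succ]
      ring
    have hε : (0 : ℝ) ≤ c / (p : ℝ) ^ (m + 1) :=
      div_nonneg hc (le_of_lt (pow_pos hppos _))
    have hv' : (((-(c / (p : ℝ) ^ (m + 1)) : ℝ)) : WithTop ℝ) ≤ v (S (m + 1) - S m) := by
      rw [hdiff, ← neg_div]
      exact hroot (m + 1) (a (m + 1)) (-c) (ha (m + 1))
    have := hdist (S m) (S (m + 1)) _ hε hv'
    refine le_trans this (le_of_eq ?_)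
    rw [div_pow, one_pow, div_mul_div_comm, mul_one, ← pow_succ']
  have hcauchy : CauchySeq (fun m => G (S m)) :=
    cauchySeq_of_le_geometric (1 / p) (c / p) (by rw [div_lt_one hppos]; exact hp1) hSstep
  obtain ⟨lim, hlim⟩ := cauchySeq_tendsto_of_complete hcauchy
  -- additivity of ψ^[k]
  have hadd : ∀ (k : ℕ) (x y : K), ψ^[k] (x + y) = ψ^[k] x + ψ^[k] y := by
    intro k
    induction k with
    | zero => intro x y; simp
    | succ k ih =>
        intro x y
        simp only [Function.iterate_succ_apply, hψdef, map_add]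
        exact ih _ _
  have hsub : ∀ (k : ℕ) (x y : K), ψ^[k] (x - y) = ψ^[k] x - ψ^[k] y := by
    intro k
    induction k with
    | zero => intro x y; simp
    | succ k ih =>
        intro x y
        simp only [Function.iterate_succ_apply, hψdef, map_sub]
        exact ih _ _
  have hfrobk : ∀ (k : ℕ) (z : K), ψ^[k + 1] (z ^ p) = ψ^[k] z := by
    intro k z
    rw [Function.iterate_succ_apply]
    congr 1
    show (frobeniusEquiv K p).symm (z ^ p) = z
    rw [← frobenius_def, frobeniusEquiv_symm_apply_frobenius]
  -- telescoping
  have htel : ∀ m : ℕ, T m = S m - ψ^[m] (b m) := by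
    intro m
    induction m with
    | zero => simp [hTdef, hSdef]
    | succ m ih =>
        have hT1 : T (m + 1) = T m + ψ^[m + 1] (a (m + 1) + b m ^ p - b (m + 1)) := by
          simp only [hTdef, Finset.sum_range_succ, Nat.succ_ne_zero, if_neg,
            Nat.add_sub_cancel]
          norm_num
        have hS1 : S (m + 1) = S m + ψ^[m + 1] (a (m + 1)) := by
          simp only [hSdef, Finset.sum_range_succ]
        rw [hT1, ih, hS1, hsub, hadd, hfrobk]
        ring
  -- second sequence tends to the same limit
  have hTdist : ∀ m : ℕ, dist (G (T m)) (G (S m)) ≤ c * (1 / p) ^ m := by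
    intro m
    have hdiff : S m - T m = ψ^[m] (b m) := by rw [htel m]; ring
    have hε : (0 : ℝ) ≤ c / (p : ℝ) ^ m := div_nonneg hc (le_of_lt (pow_pos hppos _))
    have hv' : (((-(c / (p : ℝ) ^ m) : ℝ)) : WithTop ℝ) ≤ v (S m - T m) := by
      rw [hdiff, ← neg_div]
      exact hroot m (b m) (-c) (hb m)
    have := hdist (T m) (S m) _ hε hv'
    refine le_trans this (le_of_eq ?_)
    rw [div_pow, one_pow, mul_one_div]
  have hTlim : Tendsto (fun m => G (T m)) atTop (nhds lim) := by
    refine hlim.congr_dist ?_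
    have h0 : Tendsto (fun m : ℕ => c * (1 / (p : ℝ)) ^ m) atTop (nhds 0) := by
      have := tendsto_pow_atTop_nhds_zero_of_lt_one
        (le_of_lt (by positivity : (0:ℝ) < 1 / p)) (by rw [div_lt_one hppos]; exact hp1)
      simpa using this.const_mul c
    refine squeeze_zero (fun m => dist_nonneg) (fun m => ?_) h0
    rw [dist_comm]
    exact hTdist m
  -- lower bound
  have hIbdd : BddBelow (Set.range fun k => G (a k)) := by
    refine ⟨-c, ?_⟩
    rintro x ⟨k, rfl⟩
    exact hGge (a k) (-c) (by linarith) (ha k)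
  have hIle : ∀ m : ℕ, (⨅ k : ℕ, G (a k)) ≤ G (S m) := by
    intro m
    set I : ℝ := ⨅ k : ℕ, G (a k) with hIdef
    have hI0 : I ≤ 0 := le_trans (ciInf_le hIbdd 0) (hGle (a 0))
    refine hGge (S m) I hI0 ?_
    refine hsum I (m + 1) _ (fun k hk => ?_)
    have h1 : ((G (a k) : ℝ) : WithTop ℝ) ≤ v (a k) := hvG (a k)
    have h2 := hroot k (a k) (G (a k)) h1
    refine le_trans (WithTop.coe_le_coe.mpr ?_) h2
    have h3 : I ≤ G (a k) := ciInf_le hIbdd k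
    have h4 : G (a k) ≤ G (a k) / (p : ℝ) ^ k := by
      have hpk : (1 : ℝ) ≤ (p : ℝ) ^ k := one_le_pow₀ (le_of_lt hp1)
      rw [le_div_iff₀ (by positivity)]
      nlinarith [hGle (a k)]
    linarith
  refine ⟨lim, hlim, hTlim, ?_⟩
  exact ge_of_tendsto' hlim hIle
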